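/- Fix an integer n ≥ 1 and λ ∈ (0,n). For every δ > 0 there is a constant C = C(n,λ,δ) with the following property: for every ball B = B(x_B,r_B) ⊂ ℝⁿ, the function ω̃(x,t) = r_B^{−λ} min{1, (r_B/√(|x−x_B|² + t²))^{λ+δ}} on ℝ^{n+1}_+ satisfies Nω̃(x) ≤ r_B^{−λ} min{1, (√2 r_B/|x−x_B|)^{λ+δ}} for every x ∈ ℝⁿ, and ∫_{ℝⁿ} Nω̃ dΛ_λ^{(∞)} ≤ C. -/

import Mathlib

open MeasureTheory Filter Metric Set
open scoped ENNReal NNReal Topology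

noncomputable section

abbrev XX (n : ℕ) := EuclideanSpace ℝ (Fin n)

/-- λ-dimensional Hausdorff capacity. -/
def hausCap (n : ℕ) (lam : ℝ) (E : Set (XX n)) : ℝ≥0∞ :=
  ⨅ (c : ℕ → XX n) (r : ℕ → ℝ) (_ : ∀ j, 0 < r j)
    (_ : E ⊆ ⋃ j, Metric.ball (c j) (r j)), ∑' j, ENNReal.ofReal ((r j) ^ lam)

/-- Choquet integral against the Hausdorff capacity. -/
def choquetInt (n : ℕ) (lam : ℝ) (f : XX n → ℝ≥0∞) : ℝ≥0∞ :=
  ∫⁻ t in Set.Ioi (0 : ℝ), hausCap n lam {x | ENNReal.ofReal t < f x}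

/-- Nontangential maximal function of a function on the upper half-space. -/
def ntMax (n : ℕ) (ω : XX n × ℝ → ℝ≥0∞) (x : XX n) : ℝ≥0∞ :=
  ⨆ (q : XX n × ℝ) (_ : 0 < q.2 ∧ dist x q.1 < q.2), ω q

/-- The upper half-space `ℝ^{n+1}_+`. -/
def upperHalf (n : ℕ) : Set (XX n × ℝ) := {q | 0 < q.2}

/-- Admissible weights in the definition of the `FṪ^λ` quasi-norm. -/
def Admissible (n : ℕ) (lam : ℝ) (F : XX n × ℝ → ℂ) (ω : XX n × ℝ → ℝ≥0∞) : Prop :=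
  Measurable ω ∧ choquetInt n lam (ntMax n ω) ≤ 1 ∧
    ∀ q ∈ upperHalf n, ω q = 0 → F q = 0

/-- The `FṪ^λ` quasi-norm. -/
def FTnorm (n : ℕ) (lam : ℝ) (F : XX n × ℝ → ℂ) : ℝ≥0∞ :=
  ⨅ (ω : XX n × ℝ → ℝ≥0∞) (_ : Admissible n lam F ω),
    (∫⁻ q in upperHalf n, ((‖F q‖₊ : ℝ≥0∞) ^ 2 / ω q) * ENNReal.ofReal q.2⁻¹) ^ (1/2 : ℝ)

/-- The tent over the ball `B(xB, rB)`. -/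
def tent (n : ℕ) (xB : XX n) (rB : ℝ) : Set (XX n × ℝ) :=
  {q | 0 < q.2 ∧ Metric.ball q.1 q.2 ⊆ Metric.ball xB rB}

/-- An `FṪ^λ`-atom. -/
def IsTentAtom (n : ℕ) (lam : ℝ) (a : XX n × ℝ → ℂ) : Prop :=
  Measurable a ∧ ∃ (xB : XX n) (rB : ℝ), 0 < rB ∧
    (∀ q, q ∉ tent n xB rB → a q = 0) ∧
    (∫⁻ q in tent n xB rB, (‖a q‖₊ : ℝ≥0∞) ^ 2 * ENNReal.ofReal q.2⁻¹) ≤ ENNReal.ofReal (rB ^ (-lam))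

/-- The tent space `T²₂` norm. -/
def T22norm (n : ℕ) (F : XX n × ℝ → ℂ) : ℝ≥0∞ :=
  (∫⁻ x : XX n, ∫⁻ q in {q : XX n × ℝ | 0 < q.2 ∧ dist x q.1 < q.2},
      (‖F q‖₊ : ℝ≥0∞) ^ 2 * ENNReal.ofReal (q.2 ^ (-(n : ℝ) - 1))) ^ (1/2 : ℝ)

end

noncomputable section AuxS7

/-- Geometric series constant. -/
def geomK (lam : ℝ) : ℝ≥0∞ := ∑' j : ℕ, (ENNReal.ofReal ((2:ℝ)⁻¹ ^ lam)) ^ j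

lemma geomK_ne_top {lam : ℝ} (hlam : 0 < lam) : geomK lam ≠ ∞ := by
  rw [geomK, ENNReal.tsum_geometric]
  have h1 : ENNReal.ofReal ((2:ℝ)⁻¹ ^ lam) < 1 :=
    ENNReal.ofReal_lt_one.2 (Real.rpow_lt_one (by norm_num) (by norm_num) hlam)
  simpa [ENNReal.inv_ne_top, tsub_eq_zero_iff_le, not_le] using h1

lemma one_le_geomK (lam : ℝ) : 1 ≤ geomK lam := by
  have := ENNReal.le_tsum (f := fun j : ℕ => (ENNReal.ofReal ((2:ℝ)⁻¹ ^ lam)) ^ j) 0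
  simpa [geomK] using this

lemma hausCap_mono {n : ℕ} {lam : ℝ} {E F : Set (XX n)} (h : E ⊆ F) :
    hausCap n lam E ≤ hausCap n lam F := by
  simp only [hausCap]
  exact le_iInf fun c => le_iInf fun r => le_iInf fun hr => le_iInf fun hcov =>
    iInf_le_of_le c (iInf_le_of_le r (iInf_le_of_le hr (iInf_le_of_le (h.trans hcov) le_rfl)))

lemma hausCap_le_ball {n : ℕ} {lam : ℝ} (hlam : 0 < lam) (c : XX n) {r : ℝ} (hr : 0 < r)
    {E : Set (XX n)} (hE : E ⊆ Metric.ball c r) :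
    hausCap n lam E ≤ ENNReal.ofReal (r ^ lam) * geomK lam := by
  have key : hausCap n lam E ≤ ∑' j : ℕ, ENNReal.ofReal ((r * (2:ℝ)⁻¹ ^ j) ^ lam) := by
    refine iInf_le_of_le (fun _ => c) (iInf_le_of_le (fun j => r * (2:ℝ)⁻¹ ^ j)
      (iInf_le_of_le (fun j => by positivity) (iInf_le_of_le ?_ le_rfl)))
    intro x hx
    exact mem_iUnion.2 ⟨0, by simpa using hE hx⟩
  refine key.trans_eq ?_
  have hterm : ∀ j : ℕ, ENNReal.ofReal ((r * (2:ℝ)⁻¹ ^ j) ^ lam)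
      = ENNReal.ofReal (r ^ lam) * (ENNReal.ofReal ((2:ℝ)⁻¹ ^ lam)) ^ j := by
    intro j
    have h1 : (r * (2:ℝ)⁻¹ ^ j) ^ lam = r ^ lam * ((2:ℝ)⁻¹ ^ lam) ^ j := by
      rw [Real.mul_rpow hr.le (by positivity)]
      congr 1
      rw [← Real.rpow_natCast ((2:ℝ)⁻¹) j, ← Real.rpow_mul (by norm_num), mul_comm,
        Real.rpow_mul (by norm_num), Real.rpow_natCast]
    rw [h1, ENNReal.ofReal_mul (by positivity), ENNReal.ofReal_pow (by positivity)]
  simp_rw [hterm]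
  rw [ENNReal.tsum_mul_left, geomK]

lemma hausCap_empty {n : ℕ} {lam : ℝ} (hlam : 0 < lam) : hausCap n lam (∅ : Set (XX n)) = 0 := by
  refine le_antisymm ?_ zero_le
  have htend : Tendsto (fun ε : ℝ => ENNReal.ofReal (ε ^ lam) * geomK lam)
      (𝓝[>] (0:ℝ)) (𝓝 0) := by
    have h1 : Tendsto (fun ε : ℝ => ENNReal.ofReal (ε ^ lam)) (𝓝[>] (0:ℝ)) (𝓝 0) := by
      have h2 : Tendsto (fun ε : ℝ => ε ^ lam) (𝓝 (0:ℝ)) (𝓝 (0:ℝ)) := by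
        have := (Real.continuousAt_rpow_const 0 lam (Or.inr hlam.le)).tendsto
        simpa [Real.zero_rpow hlam.ne'] using this
      have := (ENNReal.continuous_ofReal.tendsto 0).comp h2
      simpa [Function.comp_def] using this.mono_left nhdsWithin_le_nhds
    simpa using ENNReal.Tendsto.mul_const h1 (Or.inr (geomK_ne_top hlam))
  refine ge_of_tendsto htend ?_
  filter_upwards [self_mem_nhdsWithin] with ε (hε : 0 < ε)
  exact hausCap_le_ball hlam 0 hε (empty_subset _)

end AuxS7

theorem statement7 (n : ℕ) (hn : 1 ≤ n) (lam : ℝ) (hlam0 : 0 < lam) (hlamn : lam < n)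
    (δ : ℝ) (hδ : 0 < δ) :
    ∃ C : ℝ, 0 < C ∧ ∀ (xB : XX n) (rB : ℝ), 0 < rB →
      (∀ x : XX n,
        ntMax n (fun q => ENNReal.ofReal (rB ^ (-lam) *
            min 1 ((rB / Real.sqrt (dist q.1 xB ^ 2 + q.2 ^ 2)) ^ (lam + δ)))) x ≤
          ENNReal.ofReal (rB ^ (-lam)) *
            min 1 ((ENNReal.ofReal (Real.sqrt 2 * rB) / ENNReal.ofReal (dist x xB))
              ^ (lam + δ))) ∧
      choquetInt n lam
        (ntMax n (fun q => ENNReal.ofReal (rB ^ (-lam) *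
          min 1 ((rB / Real.sqrt (dist q.1 xB ^ 2 + q.2 ^ 2)) ^ (lam + δ))))) ≤
        ENNReal.ofReal C := by
  classical
  set p : ℝ := lam + δ with hpdef
  have hp : 0 < p := by positivity
  set θ : ℝ := lam / p with hθdef
  have hθ0 : 0 < θ := div_pos hlam0 hp
  have hθ1 : θ < 1 := by
    rw [hθdef, div_lt_one hp]; simp [hpdef, hδ]
  have hmono : Monotone (ENNReal.ofReal) := fun a b h => ENNReal.ofReal_le_ofReal h
  refine ⟨(geomK lam).toReal * (Real.sqrt 2 ^ lam * (p / δ)), ?_, ?_⟩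
  · have hK0 : (0:ℝ) < (geomK lam).toReal :=
      ENNReal.toReal_pos (by simpa using (one_le_geomK lam).trans_lt' (by norm_num) |>.ne')
        (geomK_ne_top hlam0)
    have h2 : (0:ℝ) < Real.sqrt 2 ^ lam := Real.rpow_pos_of_pos (by positivity) _
    positivity
  intro xB rB hrB
  -- shorthand
  set ω : XX n × ℝ → ℝ≥0∞ := fun q => ENNReal.ofReal (rB ^ (-lam) *
      min 1 ((rB / Real.sqrt (dist q.1 xB ^ 2 + q.2 ^ 2)) ^ p)) with hωdef
  set g : XX n → ℝ≥0∞ := fun x => ENNReal.ofReal (rB ^ (-lam)) *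
      min 1 ((ENNReal.ofReal (Real.sqrt 2 * rB) / ENNReal.ofReal (dist x xB)) ^ p) with hgdef
  have hs2rB : (0:ℝ) < Real.sqrt 2 * rB := by positivity
  have hpart1 : ∀ x : XX n, ntMax n ω x ≤ g x := by
    intro x
    refine iSup_le fun q => iSup_le fun hq => ?_
    obtain ⟨hq2, hqx⟩ := hq
    set dq : ℝ := dist q.1 xB with hdqdef
    set S : ℝ := dq ^ 2 + q.2 ^ 2 with hSdef
    have hdq0 : 0 ≤ dq := dist_nonneg
    have hS : 0 < S := by positivity
    have hsqrtS : 0 < Real.sqrt S := Real.sqrt_pos.2 hS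
    simp only [hωdef, hgdef]
    rw [ENNReal.ofReal_mul (by positivity), hmono.map_min, ENNReal.ofReal_one]
    refine mul_le_mul_right ?_ _
    rcases eq_or_lt_of_le (dist_nonneg : (0:ℝ) ≤ dist x xB) with hd | hd
    · rw [← hd, ENNReal.ofReal_zero, ENNReal.div_zero (by simp [hs2rB, hrB] : ENNReal.ofReal (Real.sqrt 2 * rB) ≠ 0),
        ENNReal.top_rpow_of_pos hp]
      simpa using min_le_left _ _
    · -- d > 0
      set d : ℝ := dist x xB with hddef
      have hdle : d ≤ Real.sqrt 2 * Real.sqrt S := by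
        have h1 : d ≤ dist x q.1 + dq := dist_triangle x q.1 xB
        have h2 : dist x q.1 + dq < q.2 + dq := by linarith
        have h3 : q.2 + dq ≤ Real.sqrt 2 * Real.sqrt S := by
          rw [← Real.sqrt_mul (by norm_num) S]
          refine (Real.le_sqrt (by positivity) (by positivity)).2 ?_
          nlinarith [sq_nonneg (q.2 - dq)]
        linarith
      have hbase : rB / Real.sqrt S ≤ Real.sqrt 2 * rB / d := by
        rw [div_le_div_iff₀ hsqrtS hd]
        nlinarith [Real.sqrt_nonneg S, hrB.le, hdle]
      have hreal : (rB / Real.sqrt S) ^ p ≤ (Real.sqrt 2 * rB / d) ^ p :=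
        Real.rpow_le_rpow (by positivity) hbase hp.le
      calc min 1 (ENNReal.ofReal ((rB / Real.sqrt S) ^ p))
          ≤ min 1 (ENNReal.ofReal ((Real.sqrt 2 * rB / d) ^ p)) :=
            min_le_min le_rfl (ENNReal.ofReal_le_ofReal hreal)
        _ = min 1 ((ENNReal.ofReal (Real.sqrt 2 * rB) / ENNReal.ofReal d) ^ p) := by
            rw [← ENNReal.ofReal_div_of_pos hd,
              ENNReal.ofReal_rpow_of_nonneg (by positivity) hp.le]
  refine ⟨hpart1, ?_⟩
  -- Part 2
  set u : ℝ := rB ^ lam with hudef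
  have hu : 0 < u := Real.rpow_pos_of_pos hrB _
  set T : ℝ := rB ^ (-lam) with hTdef
  have hT : 0 < T := Real.rpow_pos_of_pos hrB _
  have hTu : T = u⁻¹ := by rw [hTdef, hudef, Real.rpow_neg hrB.le]
  set A : ℝ := (Real.sqrt 2 * rB) ^ lam * u ^ (-θ) with hAdef
  have hA : 0 < A := by
    have := Real.rpow_pos_of_pos hs2rB lam
    have := Real.rpow_pos_of_pos hu (-θ)
    positivity
  -- level set bound
  have hgle : ∀ x, g x ≤ ENNReal.ofReal T := by
    intro x
    calc g x ≤ ENNReal.ofReal (rB ^ (-lam)) * 1 := mul_le_mul_right (min_le_left _ _) _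
      _ = ENNReal.ofReal T := by rw [mul_one]
  have hcapb : ∀ t ∈ Ioi (0:ℝ),
      hausCap n lam {x | ENNReal.ofReal t < ntMax n ω x}
        ≤ (Ioo (0:ℝ) T).indicator (fun t => ENNReal.ofReal (A * t ^ (-θ)) * geomK lam) t := by
    intro t (ht : 0 < t)
    rcases lt_or_ge t T with htT | htT
    · rw [indicator_of_mem (by exact ⟨ht, htT⟩)]
      set R : ℝ := Real.sqrt 2 * rB * (t * u) ^ (-(1/p)) with hRdef
      have htu : 0 < t * u := by positivity
      have hz : 0 < (t * u) ^ (-(1/p)) := Real.rpow_pos_of_pos htu _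
      have hR : 0 < R := by positivity
      have hsub : {x | ENNReal.ofReal t < ntMax n ω x} ⊆ Metric.ball xB R := by
        intro x hx
        simp only [mem_setOf_eq] at hx
        have hxg : ENNReal.ofReal t < g x := hx.trans_le (hpart1 x)
        by_contra hdx
        rw [mem_ball, not_lt] at hdx
        have hd : 0 < dist x xB := hR.trans_le hdx
        have hzp : ((t * u) ^ (1/p)) ≠ 0 := ne_of_gt (Real.rpow_pos_of_pos htu _)
        have hq1 : Real.sqrt 2 * rB / R = (t * u) ^ (1/p) := by
          simp only [hRdef, Real.rpow_neg htu.le]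
          field_simp
        have hq2' : (Real.sqrt 2 * rB / dist x xB) ^ p ≤ t * u := by
          have hle : Real.sqrt 2 * rB / dist x xB ≤ Real.sqrt 2 * rB / R := by
            gcongr
          calc (Real.sqrt 2 * rB / dist x xB) ^ p ≤ (Real.sqrt 2 * rB / R) ^ p :=
                Real.rpow_le_rpow (by positivity) hle hp.le
            _ = ((t * u) ^ (1/p)) ^ p := by rw [hq1]
            _ = t * u := by
                rw [← Real.rpow_mul htu.le, one_div_mul_cancel hp.ne', Real.rpow_one]
        have hru : rB ^ (-lam) * (t * u) = t := by
          simp only [hudef, Real.rpow_neg hrB.le]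
          field_simp
        have hglet : g x ≤ ENNReal.ofReal t := by
          simp only [hgdef]
          calc ENNReal.ofReal (rB ^ (-lam)) *
              min 1 ((ENNReal.ofReal (Real.sqrt 2 * rB) / ENNReal.ofReal (dist x xB)) ^ p)
              ≤ ENNReal.ofReal (rB ^ (-lam)) * ENNReal.ofReal (t * u) := by
                refine mul_le_mul_right ((min_le_right _ _).trans ?_) _
                rw [← ENNReal.ofReal_div_of_pos hd,
                  ENNReal.ofReal_rpow_of_nonneg (by positivity) hp.le]
                exact ENNReal.ofReal_le_ofReal hq2'
            _ = ENNReal.ofReal t := by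
                rw [← ENNReal.ofReal_mul (by positivity), hru]
        exact absurd hglet hxg.not_ge
      have hRlam : R ^ lam = A * t ^ (-θ) := by
        have h2 : ((t * u) ^ (-(1/p))) ^ lam = (t * u) ^ (-θ) := by
          rw [← Real.rpow_mul htu.le]
          congr 1
          rw [hθdef]; ring
        simp only [hRdef, hAdef]
        rw [Real.mul_rpow (by positivity) (Real.rpow_nonneg htu.le _), h2,
          Real.mul_rpow ht.le hu.le]
        ring
      refine (hausCap_le_ball hlam0 xB hR hsub).trans ?_
      exact le_of_eq (by rw [hRlam])
    · rw [indicator_of_notMem (by simp [not_lt.2 htT, Set.mem_Ioo])]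
      have hempty : {x | ENNReal.ofReal t < ntMax n ω x} = ∅ := by
        ext x
        simp only [mem_setOf_eq, mem_empty_iff_false, iff_false, not_lt]
        exact ((hpart1 x).trans (hgle x)).trans (ENNReal.ofReal_le_ofReal htT)
      rw [hempty, hausCap_empty hlam0]
  -- integrability and value of the comparison integral
  have hIcc : IntegrableOn (fun t : ℝ => t ^ (-θ)) (Ioo (0:ℝ) T) := by
    have h := (intervalIntegral.intervalIntegrable_rpow' (a := 0) (b := T)
      (r := -θ) (by linarith)).1
    exact h.mono_set Ioo_subset_Ioc_self
  have hInt : IntegrableOn (fun t : ℝ => A * t ^ (-θ)) (Ioo (0:ℝ) T) := hIcc.const_mul A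
  have hnn : 0 ≤ᵐ[volume.restrict (Ioo (0:ℝ) T)] fun t : ℝ => A * t ^ (-θ) := by
    filter_upwards [ae_restrict_mem measurableSet_Ioo] with t ht
    have ht0 : 0 < t := ht.1
    positivity
  have hθ1' : -θ + 1 = δ / p := by
    rw [hθdef, hpdef]
    field_simp
    ring
  have e1 : A * T ^ (-θ + 1) = Real.sqrt 2 ^ lam := by
    have h2 : T ^ (-θ + 1) = rB ^ (-lam * (-θ + 1)) := by
      rw [hTdef, ← Real.rpow_mul hrB.le]
    have h3 : u ^ (-θ) = rB ^ (lam * (-θ)) := by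
      rw [hudef, ← Real.rpow_mul hrB.le]
    have h4 : (Real.sqrt 2 * rB) ^ lam = Real.sqrt 2 ^ lam * rB ^ lam :=
      Real.mul_rpow (Real.sqrt_nonneg 2) hrB.le
    rw [hAdef, h2, h3, h4, mul_assoc, mul_assoc, ← Real.rpow_add hrB,
      ← Real.rpow_add hrB, show lam + (lam * -θ + -lam * (-θ + 1)) = 0 by ring,
      Real.rpow_zero, mul_one]
  have hval : ∫ t in Ioo (0:ℝ) T, A * t ^ (-θ) = Real.sqrt 2 ^ lam * (p / δ) := by
    have hint : ∫ t in Ioo (0:ℝ) T, t ^ (-θ) = T ^ (-θ + 1) / (-θ + 1) := by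
      rw [← integral_Ioc_eq_integral_Ioo, ← intervalIntegral.integral_of_le hT.le,
        integral_rpow (Or.inl (by linarith : (-1:ℝ) < -θ)),
        Real.zero_rpow (ne_of_gt (by linarith : (0:ℝ) < -θ + 1)), sub_zero]
    rw [integral_const_mul, hint,
      show A * (T ^ (-θ + 1) / (-θ + 1)) = A * T ^ (-θ + 1) / (-θ + 1) by ring,
      e1, hθ1', div_div_eq_mul_div, mul_div_assoc]
  have hind_meas : Measurable ((Ioo (0:ℝ) T).indicator
      (fun t => ENNReal.ofReal (A * t ^ (-θ)) * geomK lam)) := by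
    refine Measurable.indicator ?_ measurableSet_Ioo
    fun_prop
  calc choquetInt n lam (ntMax n ω)
      ≤ ∫⁻ t in Ioi (0:ℝ), (Ioo (0:ℝ) T).indicator
          (fun t => ENNReal.ofReal (A * t ^ (-θ)) * geomK lam) t :=
        setLIntegral_mono hind_meas hcapb
    _ = ∫⁻ t in Ioo (0:ℝ) T, ENNReal.ofReal (A * t ^ (-θ)) * geomK lam := by
        rw [lintegral_indicator measurableSet_Ioo,
          Measure.restrict_restrict measurableSet_Ioo,
          inter_eq_left.2 Ioo_subset_Ioi_self]
    _ = (∫⁻ t in Ioo (0:ℝ) T, ENNReal.ofReal (A * t ^ (-θ))) * geomK lam :=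
        lintegral_mul_const _ (by fun_prop)
    _ = ENNReal.ofReal (∫ t in Ioo (0:ℝ) T, A * t ^ (-θ)) * geomK lam := by
        rw [← ofReal_integral_eq_lintegral_ofReal hInt hnn]
    _ = ENNReal.ofReal (Real.sqrt 2 ^ lam * (p / δ)) * geomK lam := by rw [hval]
    _ ≤ ENNReal.ofReal ((geomK lam).toReal * (Real.sqrt 2 ^ lam * (p / δ))) := by
        rw [ENNReal.ofReal_mul ENNReal.toReal_nonneg,
          ENNReal.ofReal_toReal (geomK_ne_top hlam0), mul_comm]
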